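/- Let σ_1, ..., σ_{j+1} be pairwise distinct, S_t = e^{-iσ_t}/∏_{l≠t}(σ_t - σ_l), and S = Σ_t S_t. Then ∂S/∂σ_p = -i S_p + Σ_{t ≠ p} (S_t + S_p)/(σ_t - σ_p). -/

import Mathlib

open Finset

/-- The term `S_t = e^{-iσ_t} / ∏_{l≠t} (σ_t - σ_l)`. -/
noncomputable def simplexTerm {j : ℕ} (σ : Fin (j + 1) → ℂ) (t : Fin (j + 1)) : ℂ :=
  Complex.exp (-Complex.I * σ t) / ∏ l ∈ univ.erase t, (σ t - σ l)

/-- The partial derivative of `S = Σ_t S_t` with respect to σ_p equals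
`-i S_p + Σ_{t ≠ p} (S_t + S_p)/(σ_t - σ_p)`. -/
theorem deriv_simplexSum {j : ℕ} (σ : Fin (j + 1) → ℂ)
    (hσ : Function.Injective σ) (p : Fin (j + 1)) :
    HasDerivAt (fun z => ∑ t, simplexTerm (Function.update σ p z) t)
      (-Complex.I * simplexTerm σ p +
        ∑ t ∈ univ.erase p, (simplexTerm σ t + simplexTerm σ p) / (σ t - σ p))
      (σ p) := by
  classical
  have hne : ∀ t l : Fin (j + 1), l ≠ t → σ t - σ l ≠ 0 := fun t l h =>
    sub_ne_zero.mpr fun e => h (hσ e.symm)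
  have hP : ∀ t : Fin (j + 1), (∏ l ∈ univ.erase t, (σ t - σ l)) ≠ 0 := fun t =>
    Finset.prod_ne_zero_iff.mpr fun l hl => hne t l (Finset.ne_of_mem_erase hl)
  set d : Fin (j + 1) → ℂ := fun t =>
    if t = p then
      -Complex.I * simplexTerm σ p + ∑ l ∈ univ.erase p, simplexTerm σ p / (σ l - σ p)
    else simplexTerm σ t / (σ t - σ p) with hd
  have key : ∀ t : Fin (j + 1),
      HasDerivAt (fun z => simplexTerm (Function.update σ p z) t) (d t) (σ p) := by
    intro t
    by_cases htp : t = p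
    · subst htp
      have hfun : ∀ z, simplexTerm (Function.update σ t z) t =
          Complex.exp (-Complex.I * z) / ∏ l ∈ univ.erase t, (z - σ l) := by
        intro z
        simp only [simplexTerm, Function.update_self]
        congr 1
        exact Finset.prod_congr rfl fun l hl => by
          rw [Function.update_of_ne (Finset.ne_of_mem_erase hl)]
      have h1 : HasDerivAt (fun z => Complex.exp (-Complex.I * z))
          (-Complex.I * Complex.exp (-Complex.I * σ t)) (σ t) := by
        simpa [mul_comm] using ((hasDerivAt_id (σ t)).const_mul (-Complex.I)).cexp
      have h2 : HasDerivAt (fun z => ∏ l ∈ univ.erase t, (z - σ l))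
          (∑ l ∈ univ.erase t, ∏ m ∈ (univ.erase t).erase l, (σ t - σ m)) (σ t) := by
        have := HasDerivAt.fun_finsetProd (u := univ.erase t)
          (f := fun l z => z - σ l) (f' := fun _ => (1 : ℂ)) (x := σ t)
          (fun l _ => (hasDerivAt_id (σ t)).sub_const (σ l))
        simpa using this
      have hg : (∏ l ∈ univ.erase t, (σ t - σ l)) ≠ 0 := hP t
      have hdiv := h1.div h2 hg
      have heq : (-Complex.I * Complex.exp (-Complex.I * σ t) *
            (∏ l ∈ univ.erase t, (σ t - σ l)) -
          Complex.exp (-Complex.I * σ t) *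
            ∑ l ∈ univ.erase t, ∏ m ∈ (univ.erase t).erase l, (σ t - σ m)) /
            (∏ l ∈ univ.erase t, (σ t - σ l)) ^ 2 = d t := by
      -- d t = -I S_t + Σ S_t/(σ l - σ t)
        have hdt : d t = -Complex.I * simplexTerm σ t +
            ∑ l ∈ univ.erase t, simplexTerm σ t / (σ l - σ t) := by simp [hd]
        rw [hdt, sub_div, Finset.mul_sum, Finset.sum_div, sub_eq_add_neg,
          ← Finset.sum_neg_distrib]
        congr 1
        · rw [simplexTerm, sq]
          field_simp
        · refine Finset.sum_congr rfl fun l hl => ?_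
          have hQ : (∏ m ∈ (univ.erase t).erase l, (σ t - σ m)) ≠ 0 :=
            Finset.prod_ne_zero_iff.mpr fun m hm =>
              hne t m (Finset.ne_of_mem_erase (Finset.mem_of_mem_erase hm))
          have hfull : (∏ m ∈ univ.erase t, (σ t - σ m)) =
              (σ t - σ l) * ∏ m ∈ (univ.erase t).erase l, (σ t - σ m) :=
            (Finset.mul_prod_erase _ _ hl).symm
          have hlt : σ t - σ l ≠ 0 := hne t l (Finset.ne_of_mem_erase hl)
          have hlt' : σ l - σ t ≠ 0 :=
            sub_ne_zero.mpr fun e => Finset.ne_of_mem_erase hl (hσ e)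
          rw [simplexTerm, hfull, sq]
          field_simp
          ring
      exact heq ▸ hdiv.congr_of_eventuallyEq (Filter.Eventually.of_forall hfun)
    · -- t ≠ p
      have hpt : p ∈ univ.erase t := Finset.mem_erase.mpr ⟨Ne.symm htp, Finset.mem_univ p⟩
      set D : ℂ := ∏ l ∈ (univ.erase t).erase p, (σ t - σ l) with hD
      have hfun : ∀ z, simplexTerm (Function.update σ p z) t =
          Complex.exp (-Complex.I * σ t) / ((σ t - z) * D) := by
        intro z
        rw [simplexTerm, Function.update_of_ne htp]
        congr 1
        rw [← Finset.mul_prod_erase _ _ hpt, Function.update_self]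
        congr 1
        exact Finset.prod_congr rfl fun l hl => by
          rw [Function.update_of_ne (Finset.ne_of_mem_erase hl)]
      have hDne : D ≠ 0 :=
        Finset.prod_ne_zero_iff.mpr fun m hm =>
          hne t m (Finset.ne_of_mem_erase (Finset.mem_of_mem_erase hm))
      have htpne : σ t - σ p ≠ 0 := hne t p (Ne.symm htp)
      have hg : HasDerivAt (fun z => (σ t - z) * D) (-D) (σ p) := by
        have := ((hasDerivAt_const (σ p) (σ t)).sub (hasDerivAt_id (σ p))).mul_const D
        simpa using this
      have hgne : (σ t - σ p) * D ≠ 0 := mul_ne_zero htpne hDne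
      have hdiv := (hasDerivAt_const (σ p) (Complex.exp (-Complex.I * σ t))).div hg hgne
      have hfull : (∏ m ∈ univ.erase t, (σ t - σ m)) = (σ t - σ p) * D :=
        (Finset.mul_prod_erase _ _ hpt).symm
      have heq : (0 * ((σ t - σ p) * D) - Complex.exp (-Complex.I * σ t) * -D) /
          ((σ t - σ p) * D) ^ 2 = d t := by
        have hdt : d t = simplexTerm σ t / (σ t - σ p) := by simp [hd, htp]
        rw [hdt, simplexTerm, hfull]
        field_simp
        ring
      exact heq ▸ hdiv.congr_of_eventuallyEq (Filter.Eventually.of_forall hfun)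
  have hsum := HasDerivAt.fun_sum (fun t (_ : t ∈ (univ : Finset (Fin (j + 1)))) => key t)
  have hval : ∑ t, d t =
      -Complex.I * simplexTerm σ p +
        ∑ t ∈ univ.erase p, (simplexTerm σ t + simplexTerm σ p) / (σ t - σ p) := by
    rw [← Finset.add_sum_erase _ d (Finset.mem_univ p)]
    have h1 : d p = -Complex.I * simplexTerm σ p +
        ∑ l ∈ univ.erase p, simplexTerm σ p / (σ l - σ p) := by simp [hd]
    have h2 : ∑ t ∈ univ.erase p, d t =
        ∑ t ∈ univ.erase p, simplexTerm σ t / (σ t - σ p) :=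
      Finset.sum_congr rfl fun t ht => by
        simp [hd, Finset.ne_of_mem_erase ht]
    rw [h1, h2, add_assoc, ← Finset.sum_add_distrib]
    congr 1
    exact Finset.sum_congr rfl fun t _ => by rw [← add_div, add_comm]
  rw [← hval]
  exact hsum
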